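/- Let σ_p be a faithful irreducible Schrödinger representation of H = H(A,B,C,λ) on M(A) (λ non-degenerate, C cyclic, p: C → ℂ× injective, |A| = s, r = |C| odd), and D(𝐚) = σ_p(𝒟(𝐚)) for 𝐚 ∈ A ⊕ B where 𝒟(a,b) = h(a,b,(1/2)λ(a,b)). Then Tr(D(𝐚)† D(𝐚')) = s if 𝐚 = 𝐚' and 0 otherwise, and the s² operators {D(𝐚) : 𝐚 ∈ A⊕B} form a ℂ-basis of End_ℂ(M(A)). -/

import Mathlib

set_option linter.unusedSectionVars false
set_option linter.unusedVariables false
set_option linter.deprecated false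
set_option maxHeartbeats 1000000


/-- The generalised Heisenberg group `H(A,B,C,λ)` attached to a bilinear pairing
`λ : A × B → C`, as the set `A × B × C` with law
`h(a,b,c)h(a',b',c') = h(a+a', b+b', c+c'+λ(a,b'))`. -/
structure Heis {A B C : Type*} [AddCommGroup A] [AddCommGroup B] [AddCommGroup C]
    (lam : A →+ B →+ C) where
  a : A
  b : B
  c : C

namespace Heis

variable {A B C : Type*} [AddCommGroup A] [AddCommGroup B] [AddCommGroup C]
  {lam : A →+ B →+ C}

theorem ext' {x y : Heis lam} (ha : x.a = y.a) (hb : x.b = y.b) (hc : x.c = y.c) :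
    x = y := by cases x; cases y; simp_all

instance : Mul (Heis lam) :=
  ⟨fun x y => ⟨x.a + y.a, x.b + y.b, x.c + y.c + lam x.a y.b⟩⟩

instance : One (Heis lam) := ⟨⟨0, 0, 0⟩⟩

instance : Inv (Heis lam) := ⟨fun x => ⟨-x.a, -x.b, lam x.a x.b - x.c⟩⟩

@[simp] theorem mul_def (x y : Heis lam) :
    x * y = ⟨x.a + y.a, x.b + y.b, x.c + y.c + lam x.a y.b⟩ := rfl

@[simp] theorem one_def : (1 : Heis lam) = ⟨0, 0, 0⟩ := rfl

@[simp] theorem inv_def (x : Heis lam) : x⁻¹ = ⟨-x.a, -x.b, lam x.a x.b - x.c⟩ := rfl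

instance instGroup : Group (Heis lam) where
  mul := (· * ·)
  one := 1
  inv := (·⁻¹)
  mul_assoc x y z := by apply ext' <;> simp [map_add] <;> abel
  one_mul x := by apply ext' <;> simp
  mul_one x := by apply ext' <;> simp
  inv_mul_cancel x := by apply ext' <;> simp [map_neg]

end Heis


/-- The displacement section `𝒟 : A ⊕ B → H(A,B,C,λ)`, `𝒟(a,b) = h(a, b, ½λ(a,b))`. -/
def Dmap {A B C : Type*} [AddCommGroup A] [AddCommGroup B] [AddCommGroup C]
    (lam : A →+ B →+ C) (half : C → C) (x : A × B) : Heis lam :=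
  ⟨x.1, x.2, half (lam x.1 x.2)⟩

/-- The Schrödinger representation `σ_p` of `H(A,B,C,λ)` as a linear operator on
`M(A) = (A → ℂ)`: `(σ_p(h(a,b,c))f)(x) = p(λ(x,b)+c) f(x+a)`. -/
def schrodL {A B C : Type*} [AddCommGroup A] [AddCommGroup B] [AddCommGroup C]
    (lam : A →+ B →+ C) (p : C → ℂ) (h : Heis lam) : (A → ℂ) →ₗ[ℂ] (A → ℂ) where
  toFun f := fun x => p (lam x h.b + h.c) * f (x + h.a)
  map_add' f g := by funext x; simp [mul_add]
  map_smul' z f := by funext x; simp [smul_eq_mul]; ring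



section Aux

variable {A B C : Type*} [AddCommGroup A] [AddCommGroup B] [AddCommGroup C]
  [Fintype A] [Fintype B] [Fintype C] [DecidableEq A] [DecidableEq B]
  (lam : A →+ B →+ C) (p : C → ℂ)

/-- The trace of an endomorphism of `A → ℂ` as a sum of diagonal entries. -/
lemma trace_pi_eq (T : (A → ℂ) →ₗ[ℂ] (A → ℂ)) :
    LinearMap.trace ℂ (A → ℂ) T = ∑ a : A, T (Pi.single a 1) a := by
  rw [LinearMap.trace_eq_matrix_trace ℂ (Pi.basisFun ℂ A)]
  simp [Matrix.trace, LinearMap.toMatrix_apply, Matrix.diag]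

variable (hp0 : p 0 = 1) (hpadd : ∀ c c' : C, p (c + c') = p c * p c')

include hp0 hpadd in
lemma p_mul_p_neg (c : C) : p c * p (-c) = 1 := by
  rw [← hpadd, add_neg_cancel, hp0]

include hp0 hpadd in
lemma p_ne_zero (c : C) : p c ≠ 0 := by
  intro h
  have := p_mul_p_neg p hp0 hpadd c
  rw [h, zero_mul] at this
  exact one_ne_zero this.symm

include hp0 hpadd in
lemma p_pow (n : ℕ) (c : C) : p c ^ n = p (n • c) := by
  induction n with
  | zero => simp [hp0]
  | succ n ih => rw [pow_succ, ih, succ_nsmul, hpadd]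

include hp0 hpadd in
lemma star_p (c : C) : star (p c) = p (-c) := by
  have h1 : p c * p (-c) = 1 := p_mul_p_neg p hp0 hpadd c
  have hpow : p c ^ Fintype.card C = 1 := by
    rw [p_pow p hp0 hpadd]
    simp [hp0]
  have habs : ‖p c‖ = 1 := by
    have hone : ‖p c‖ ^ Fintype.card C = 1 := by
      rw [← norm_pow, hpow, norm_one]
    have hcard : 0 < Fintype.card C := Fintype.card_pos
    rcases lt_trichotomy (‖p c‖) 1 with h | h | h
    · exact absurd hone (by
        have := pow_lt_one₀ (norm_nonneg _) h hcard.ne'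
        linarith)
    · exact h
    · exact absurd hone (by
        have := one_lt_pow₀ h hcard.ne'
        linarith)
  have hstar : star (p c) * p c = 1 := by
    have := Complex.mul_conj (p c)
    rw [Complex.normSq_eq_norm_sq, habs] at this
    rw [mul_comm] at this
    simpa using this
  calc star (p c) = star (p c) * (p c * p (-c)) := by rw [h1, mul_one]
    _ = (star (p c) * p c) * p (-c) := by ring
    _ = p (-c) := by rw [hstar, one_mul]

include hp0 hpadd in
lemma sum_char (hB : ∀ b : B, (∀ a : A, lam a b = 0) → b = 0)
    (hpinj : Function.Injective p) (d : B) (hd : d ≠ 0) :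
    ∑ a : A, p (lam a d) = 0 := by
  obtain ⟨a₀, ha₀⟩ : ∃ a : A, lam a d ≠ 0 := by
    by_contra h
    push_neg at h
    exact hd (hB d h)
  have key : (∑ a : A, p (lam a d)) * p (lam a₀ d) = ∑ a : A, p (lam a d) := by
    rw [Finset.sum_mul]
    refine Fintype.sum_equiv (Equiv.addRight a₀) _ _ fun a => ?_
    simp [hpadd, map_add]
  have hne : p (lam a₀ d) ≠ 1 := fun h => ha₀ (hpinj (h.trans hp0.symm))
  by_contra hsum
  exact hne (mul_left_cancel₀ hsum (key.trans (mul_one _).symm))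

end Aux

/-- For the faithful irreducible Schrödinger representation `σ_p` of `H(A,B,C,λ)`
(ND-C, `p` injective, `|C|` odd) and the displacement operators `D(𝐚) = σ_p(𝒟(𝐚))`:
`D(−𝐚)` is the adjoint of `D(𝐚)` w.r.t. `⟨f,g⟩ = Σ_x f(x)*g(x)`,
`Tr(D(𝐚)† D(𝐚')) = |A|` if `𝐚 = 𝐚'` and `0` otherwise, and the `s²` operators
`D(𝐚)`, `𝐚 ∈ A ⊕ B`, form a `ℂ`-basis of `End_ℂ(M(A))`. -/
theorem stmt_19 {A B C : Type*} [AddCommGroup A] [AddCommGroup B] [AddCommGroup C]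
    [Fintype A] [Fintype B] [Fintype C] [DecidableEq A] [DecidableEq B] [IsAddCyclic C]
    (lam : A →+ B →+ C)
    (hA : ∀ a : A, (∀ b : B, lam a b = 0) → a = 0)
    (hB : ∀ b : B, (∀ a : A, lam a b = 0) → b = 0)
    (p : C → ℂ) (hp0 : p 0 = 1) (hpadd : ∀ c c' : C, p (c + c') = p c * p c')
    (hpinj : Function.Injective p)
    (hodd : Odd (Fintype.card C))
    (half : C → C) (hhalf : ∀ c : C, half c + half c = c) :
    (∀ (x : A × B) (f g : A → ℂ),
        ∑ a : A, star (schrodL lam p (Dmap lam half x) f a) * g a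
          = ∑ a : A, star (f a) * schrodL lam p (Dmap lam half (-x)) g a) ∧
      (∀ x y : A × B,
        LinearMap.trace ℂ (A → ℂ)
            ((schrodL lam p (Dmap lam half (-x))).comp (schrodL lam p (Dmap lam half y)))
          = if x = y then (Fintype.card A : ℂ) else 0) ∧
      LinearIndependent ℂ (fun x : A × B => schrodL lam p (Dmap lam half x)) ∧
      Submodule.span ℂ (Set.range fun x : A × B => schrodL lam p (Dmap lam half x)) = ⊤ := by
  have hstarp := star_p p hp0 hpadd
  classical
  have part1 : ∀ (x : A × B) (f g : A → ℂ),
      ∑ a : A, star (schrodL lam p (Dmap lam half x) f a) * g a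
        = ∑ a : A, star (f a) * schrodL lam p (Dmap lam half (-x)) g a := by
    intro x f g
    refine Fintype.sum_equiv (Equiv.addRight x.1) _ _ fun a => ?_
    simp only [schrodL, Dmap, LinearMap.coe_mk, AddHom.coe_mk, Equiv.coe_addRight,
      Prod.fst_neg, Prod.snd_neg, map_neg, neg_neg, add_neg_cancel_right]
    rw [star_mul', hstarp]
    have hc : -(lam a x.2 + half (lam x.1 x.2))
        = -(lam (a + x.1) x.2) + half (lam x.1 x.2) := by
      generalize hgen : half (lam x.1 x.2) = h
      have hv : h + h = lam x.1 x.2 := by rw [← hgen]; exact hhalf _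
      rw [map_add, AddMonoidHom.add_apply, ← hv]
      abel
    rw [hc]
    simp only [map_neg, AddMonoidHom.neg_apply, neg_neg]
    ring
  have part2 : ∀ x y : A × B,
      LinearMap.trace ℂ (A → ℂ)
          ((schrodL lam p (Dmap lam half (-x))).comp (schrodL lam p (Dmap lam half y)))
        = if x = y then (Fintype.card A : ℂ) else 0 := by
    intro x y
    rw [trace_pi_eq]
    have hterm : ∀ a : A,
        ((schrodL lam p (Dmap lam half (-x))).comp (schrodL lam p (Dmap lam half y)))
          (Pi.single a 1) a
        = (if y.1 = x.1 then
            p ((lam a (-x.2) + half (lam x.1 x.2)) +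
              (lam (a + -x.1) y.2 + half (lam y.1 y.2))) else 0) := by
      intro a
      simp only [LinearMap.comp_apply, schrodL, Dmap, LinearMap.coe_mk, AddHom.coe_mk,
        Prod.fst_neg, Prod.snd_neg, map_neg, neg_neg, AddMonoidHom.neg_apply]
      rw [Pi.single_apply]
      have hiff : (a + -x.1 + y.1 = a) ↔ (y.1 = x.1) := by
        rw [add_assoc, add_eq_left, neg_add_eq_zero, eq_comm]
      by_cases hcase : y.1 = x.1
      · rw [if_pos (hiff.mpr hcase), if_pos hcase, mul_one, ← hpadd]
      · rw [if_neg (fun h => hcase (hiff.mp h)), if_neg hcase, mul_zero, mul_zero]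
    rw [Finset.sum_congr rfl fun a _ => hterm a]
    by_cases h1 : y.1 = x.1
    · simp only [if_pos h1]
      by_cases h2 : y.2 = x.2
      · have hxy : x = y := Prod.ext h1.symm h2.symm
        rw [if_pos hxy]
        have hE : ∀ a : A, ((lam a (-x.2) + half (lam x.1 x.2)) +
            (lam (a + -x.1) y.2 + half (lam y.1 y.2))) = 0 := by
          intro a
          rw [h1, h2]
          generalize hgen : half (lam x.1 x.2) = h
          have hv : h + h = lam x.1 x.2 := by rw [← hgen]; exact hhalf _
          simp only [map_add, map_neg, AddMonoidHom.add_apply, AddMonoidHom.neg_apply]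
          rw [← hv]
          abel
        simp only [hE, hp0]
        simp
      · have hxy : x ≠ y := fun h => h2 (by rw [h])
        rw [if_neg hxy]
        have hd : y.2 - x.2 ≠ 0 := fun h => h2 (sub_eq_zero.mp h)
        have hE : ∀ a : A, ((lam a (-x.2) + half (lam x.1 x.2)) +
            (lam (a + -x.1) y.2 + half (lam y.1 y.2)))
            = lam a (y.2 - x.2) +
              (half (lam x.1 x.2) + half (lam y.1 y.2) - lam x.1 y.2) := by
          intro a
          simp only [map_add, map_neg, map_sub, AddMonoidHom.add_apply,
            AddMonoidHom.neg_apply, AddMonoidHom.sub_apply]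
          abel
        simp only [hE, hpadd]
        rw [← Finset.sum_mul, sum_char lam p hp0 hpadd hB hpinj _ hd, zero_mul]
    · have hxy : x ≠ y := fun h => h1 (by rw [h])
      rw [if_neg hxy]
      exact Finset.sum_eq_zero fun a _ => if_neg h1
  have hAcard : (Fintype.card A : ℂ) ≠ 0 := Nat.cast_ne_zero.mpr Fintype.card_pos.ne'
  have part3 : LinearIndependent ℂ (fun x : A × B => schrodL lam p (Dmap lam half x)) := by
    rw [Fintype.linearIndependent_iff]
    intro g hg x₀
    have key : LinearMap.trace ℂ (A → ℂ)
        ((schrodL lam p (Dmap lam half (-x₀))).comp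
          (∑ x : A × B, g x • schrodL lam p (Dmap lam half x))) = 0 := by
      rw [hg, LinearMap.comp_zero, map_zero]
    rw [← Module.End.mul_eq_comp, Finset.mul_sum] at key
    simp only [mul_smul_comm, map_sum, map_smul, Module.End.mul_eq_comp] at key
    simp only [part2, smul_eq_mul, mul_ite, mul_one, mul_zero] at key
    rw [Finset.sum_ite_eq (Finset.univ) x₀ (fun x => g x * (Fintype.card A : ℂ))] at key
    simp only [Finset.mem_univ, if_pos] at key
    exact (mul_eq_zero.mp key).resolve_right hAcard
  refine ⟨part1, part2, part3, ?_⟩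
  -- spanning: dimension count
  have hBA : Fintype.card B ≤ Fintype.card A := by
    have := part3.fintype_card_le_finrank
    rw [Module.finrank_linearMap, Module.finrank_pi, Fintype.card_prod] at this
    exact Nat.le_of_mul_le_mul_left this Fintype.card_pos
  have hAB : Fintype.card A ≤ Fintype.card B := by
    -- characters of B indexed by A are linearly independent
    let φ : A → (Multiplicative B →* ℂ) := fun a =>
      { toFun := fun b => p (lam a b.toAdd)
        map_one' := by simpa using hp0
        map_mul' := fun b b' => by simp [hpadd, map_add] }
    have hφ : Function.Injective φ := by
      intro a a' h
      have h' : ∀ b : B, lam a b = lam a' b := by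
        intro b
        have := congrFun (congrArg (fun f : Multiplicative B →* ℂ => (f : Multiplicative B → ℂ)) h)
          (Multiplicative.ofAdd b)
        exact hpinj this
      have : a - a' = 0 := hA _ (fun b => by rw [map_sub, AddMonoidHom.sub_apply, h' b, sub_self])
      exact sub_eq_zero.mp this
    have hli : LinearIndependent ℂ (fun a : A => ((φ a : Multiplicative B → ℂ))) :=
      (linearIndependent_monoidHom (Multiplicative B) ℂ).comp φ hφ
    have := hli.fintype_card_le_finrank
    rwa [Module.finrank_pi, Fintype.card_multiplicative] at this
  refine part3.span_eq_top_of_card_eq_finrank ?_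
  rw [Module.finrank_linearMap, Module.finrank_pi, Fintype.card_prod,
    le_antisymm hBA hAB]
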